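/- arXiv:1302.3194 — 5 statements merged into one kernel-verified Lean document; each statement's English description precedes it below -/
import Mathlib

section
/- Let M be a compact metric space and f : M → M a continuous map whose critical set C_f has empty interior. Then the set {x ∈ M : fⁿ(x) ∉ C_f for all n ≥ 0} = ⋂_{n ≥ 0} f^{-n}(M \ C_f) is a residual subset of M. -/
open Set

private theorem aux_isOpen_good {M : Type*} [TopologicalSpace M] (f : M → M) :
    IsOpen {x : M | IsLocalHomeomorphOn f {x}} := by
  rw [isOpen_iff_mem_nhds]
  intro x hx
  obtain ⟨e, hxe, hfe⟩ := hx x rfl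
  filter_upwards [e.open_source.mem_nhds hxe] with y hy
  exact fun z hz => ⟨e, hz ▸ hy, hfe⟩

private theorem aux_dense_preimage {M : Type*} [TopologicalSpace M] (f : M → M)
    (hG : Dense {x : M | IsLocalHomeomorphOn f {x}})
    {D : Set M} (hDo : IsOpen D) (hDd : Dense D) : Dense (f ⁻¹' D) := by
  rw [dense_iff_inter_open]
  intro U hU hUne
  obtain ⟨x, hxU, hxG⟩ := hG.inter_open_nonempty U hU hUne
  obtain ⟨e, hxe, hfe⟩ := hxG x rfl
  have himg : IsOpen (e '' (U ∩ e.source)) :=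
    e.isOpen_image_of_subset_source (hU.inter e.open_source) inter_subset_right
  have hne : (e '' (U ∩ e.source)).Nonempty := ⟨e x, x, ⟨hxU, hxe⟩, rfl⟩
  obtain ⟨y, hyimg, hyD⟩ := hDd.inter_open_nonempty _ himg hne
  obtain ⟨z, ⟨hzU, _⟩, hez⟩ := hyimg
  exact ⟨z, hzU, show f z ∈ D by rw [hfe, hez]; exact hyD⟩

/-- If the critical set of a continuous self-map `f` of a compact metric space
(the set of points at which `f` is not a local homeomorphism) has empty interior,
then the set of points whose whole forward orbit avoids the critical set is
residual in `M`. -/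
theorem orbit_avoids_critical_set_residual {M : Type*} [MetricSpace M] [CompactSpace M]
    (f : M → M) (hf : Continuous f)
    (hC : interior {x : M | ¬ IsLocalHomeomorphOn f {x}} = ∅) :
    {x : M | ∀ n : ℕ, f^[n] x ∉ {y : M | ¬ IsLocalHomeomorphOn f {y}}} ∈ residual M := by
  set G : Set M := {x : M | IsLocalHomeomorphOn f {x}} with hGdef
  have hGo : IsOpen G := aux_isOpen_good f
  have hGd : Dense G := by
    have h1 : Dense ({x : M | ¬ IsLocalHomeomorphOn f {x}}ᶜ) :=
      interior_eq_empty_iff_dense_compl.mp hC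
    have h2 : G = {x : M | ¬ IsLocalHomeomorphOn f {x}}ᶜ := by ext x; simp [hGdef]
    rw [h2]; exact h1
  have key : ∀ n : ℕ, IsOpen (f^[n] ⁻¹' G) ∧ Dense (f^[n] ⁻¹' G) := by
    intro n
    induction n with
    | zero => simpa using ⟨hGo, hGd⟩
    | succ n ih =>
      rw [Function.iterate_succ, Set.preimage_comp]
      exact ⟨hf.isOpen_preimage _ ih.1, aux_dense_preimage f hGd ih.1 ih.2⟩
  have : {x : M | ∀ n : ℕ, f^[n] x ∉ {y : M | ¬ IsLocalHomeomorphOn f {y}}} =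
      ⋂ n : ℕ, f^[n] ⁻¹' G := by
    ext x; simp [hGdef, Set.mem_iInter]
  rw [this]
  exact (countable_iInter_mem).mpr fun n =>
    residual_of_dense_open (key n).1 (key n).2
end

section
/- Let M be a nonempty compact metric space and f : M → M a continuous map. Suppose there exists a dense subset D ⊆ M such that every point x ∈ D has dense pre-orbit O⁻(x). Then the set of points of M with dense forward orbit is residual in M; in particular f is transitive. -/
/-- Let `f` be a continuous self-map of a nonempty compact metric space `M`. If there
is a dense subset `D ⊆ M` all of whose points have dense pre-orbit, then the set of
points with dense forward orbit is residual in `M`; in particular `f` is transitive. -/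
theorem dense_preorbits_implies_transitive {M : Type*} [MetricSpace M] [CompactSpace M]
    [Nonempty M] (f : M → M) (hf : Continuous f)
    (D : Set M) (hD : Dense D)
    (hpre : ∀ x ∈ D, Dense {w : M | ∃ n : ℕ, f^[n] w = x}) :
    {x : M | Dense (Set.range fun n : ℕ => f^[n] x)} ∈ residual M ∧
      ∃ x : M, Dense (Set.range fun n : ℕ => f^[n] x) := by
  obtain ⟨b, hbc, hbne, hb⟩ := TopologicalSpace.exists_countable_basis M
  have hres : (⋂ U ∈ b, ⋃ n : ℕ, f^[n] ⁻¹' U) ∈ residual M := by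
    refine (countable_bInter_mem hbc).2 fun U hU => ?_
    refine residual_of_dense_open (isOpen_iUnion fun n => (hb.isOpen hU).preimage (hf.iterate n)) ?_
    rw [dense_iff_inter_open]
    intro V hV hVne
    have hUo : IsOpen U := hb.isOpen hU
    have hUne : U.Nonempty := Set.nonempty_iff_ne_empty.2 (by rintro rfl; exact hbne hU)
    obtain ⟨d, hdU, hdD⟩ := hD.inter_open_nonempty U hUo hUne
    obtain ⟨w, hwV, n, hwn⟩ := (hpre d hdD).inter_open_nonempty V hV hVne
    exact ⟨w, hwV, Set.mem_iUnion.2 ⟨n, by simp [hwn, hdU]⟩⟩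
  have hsub : (⋂ U ∈ b, ⋃ n : ℕ, f^[n] ⁻¹' U) ⊆
      {x : M | Dense (Set.range fun n : ℕ => f^[n] x)} := by
    intro x hx
    rw [Set.mem_iInter₂] at hx
    rw [Set.mem_setOf_eq, dense_iff_inter_open]
    intro V hV hVne
    obtain ⟨U, hU, hmU, hUsub⟩ := hb.exists_subset_of_mem_open hVne.choose_spec hV
    obtain ⟨n, hn⟩ := Set.mem_iUnion.1 (hx U hU)
    exact ⟨f^[n] x, hUsub hn, ⟨n, rfl⟩⟩
  have hmem := Filter.mem_of_superset hres hsub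
  refine ⟨hmem, ?_⟩
  obtain ⟨x, hx⟩ := (dense_of_mem_residual hmem).nonempty
  exact ⟨x, hx⟩
end

section
/- Let Δ be a nonempty bounded complete metric space, (P_i)_{i ∈ I} a countable family of pairwise disjoint nonempty open subsets of Δ, and F : Δ → Δ a Borel map such that for each i ∈ I the restriction F|_{P_i} is a homeomorphism from P_i onto Δ whose inverse (F|_{P_i})^{-1} : Δ → P_i is a ρ-Lipschitz contraction for some fixed ρ ∈ (0,1). Let (a_i)_{i ∈ I} be positive real numbers with ∑_{i ∈ I} a_i = 1. Then there exists a Borel probability measure ν on Δ such that: (i) for every n ≥ 1 and every finite word (i_0, …, i_{n−1}) ∈ Iⁿ, ν(P_{i_0} ∩ F^{-1}(P_{i_1}) ∩ … ∩ F^{-(n−1)}(P_{i_{n−1}})) = a_{i_0} a_{i_1} ⋯ a_{i_{n−1}}; (ii) ν is F-invariant; and (iii) the system (F, ν) is ergodic. -/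
open MeasureTheory

section BFBMAux
open Set

namespace BFBM
noncomputable section
open scoped Classical

variable {I : Type*}

def lpt (a : I → ℝ) (e : I → ℕ) (i : I) : ℝ := ∑' j, if e j < e i then a j else 0

def seg (a : I → ℝ) (e : I → ℕ) (i : I) : Set ℝ :=
  Set.Ico (lpt a e i) (lpt a e i + a i)

def dig (a : I → ℝ) (e : I → ℕ) [Nonempty I] (x : ℝ) : I :=
  if h : ∃ i, x ∈ seg a e i then h.choose else Classical.arbitrary I

def rmap (a : I → ℝ) (e : I → ℕ) [Nonempty I] (x : ℝ) : ℝ :=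
  if h : ∃ i, x ∈ seg a e i then (x - lpt a e h.choose) / a h.choose else 0

variable {a : I → ℝ} {e : I → ℕ}

set_option linter.unusedSectionVars false

section basic
variable (ha : ∀ i, 0 < a i) (hsum : ∑' i, a i = 1) (he : Function.Injective e)
include ha hsum

theorem summable_a : Summable a := by
  by_contra h
  rw [tsum_eq_zero_of_not_summable h] at hsum
  norm_num at hsum

theorem lpt_nonneg (i : I) : 0 ≤ lpt a e i :=
  tsum_nonneg fun j => by
    by_cases h : e j < e i <;> simp [h, (ha j).le]

theorem summable_f (i : I) : Summable (fun j => if e j < e i then a j else 0) :=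
  Summable.of_nonneg_of_le (fun j => by by_cases h : e j < e i <;> simp [h, (ha j).le])
    (fun j => by by_cases h : e j < e i <;> simp [h, (ha j).le]) (summable_a ha hsum)

theorem summable_g (i : I) :
    Summable (fun j => (if e j < e i then a j else 0) + if j = i then a i else 0) :=
  (summable_f ha hsum i).add (hasSum_ite_eq i (a i)).summable

theorem tsum_g (i : I) :
    ∑' j, ((if e j < e i then a j else 0) + if j = i then a i else 0) = lpt a e i + a i := by
  rw [Summable.tsum_add (summable_f ha hsum i) (hasSum_ite_eq i (a i)).summable,
    (hasSum_ite_eq i (a i)).tsum_eq]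
  rfl

theorem lpt_add_le_one (i : I) : lpt a e i + a i ≤ 1 := by
  rw [← tsum_g ha hsum i, ← hsum]
  refine Summable.tsum_le_tsum (fun j => ?_) (summable_g ha hsum i) (summable_a ha hsum)
  rcases eq_or_ne j i with rfl | hj
  · simp [lt_irrefl, (ha j).le]
  · by_cases h : e j < e i <;> simp [h, hj, (ha j).le]

theorem lpt_mono {i j : I} (hij : e i < e j) : lpt a e i + a i ≤ lpt a e j := by
  rw [← tsum_g ha hsum i]
  refine Summable.tsum_le_tsum (fun k => ?_) (summable_g ha hsum i) (summable_f ha hsum j)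
  rcases eq_or_ne k i with rfl | hk
  · simp [lt_irrefl, hij, (ha k).le]
  · by_cases h : e k < e i
    · simp [h, hk, h.trans hij, (ha k).le]
    · simp [h, hk]
      by_cases h' : e k < e j <;> simp [h', (ha k).le]

theorem seg_subset (i : I) : seg a e i ⊆ Set.Ico (0:ℝ) 1 := fun x hx =>
  ⟨(lpt_nonneg ha hsum i).trans hx.1, hx.2.trans_le (lpt_add_le_one ha hsum i)⟩

include he in
theorem seg_disjoint {i j : I} (hij : i ≠ j) : Disjoint (seg a e i) (seg a e j) := by
  rw [seg, seg, Set.Ico_disjoint_Ico]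
  rcases lt_or_gt_of_ne (fun h => hij (he h)) with h | h
  · exact le_sup_of_le_right ((inf_le_left).trans (lpt_mono ha hsum h))
  · exact le_sup_of_le_left ((inf_le_right).trans (lpt_mono ha hsum h))

variable [Nonempty I] [Countable I]
include he

theorem dig_eq {i : I} {x : ℝ} (hx : x ∈ seg a e i) : dig a e x = i := by
  rw [dig, dif_pos ⟨i, hx⟩]
  by_contra hne
  exact Set.disjoint_left.mp (seg_disjoint ha hsum he hne) (⟨i, hx⟩ : ∃ i, x ∈ seg a e i).choose_spec hx

theorem rmap_eq {i : I} {x : ℝ} (hx : x ∈ seg a e i) :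
    rmap a e x = (x - lpt a e i) / a i := by
  rw [rmap, dif_pos ⟨i, hx⟩]
  have : (⟨i, hx⟩ : ∃ i, x ∈ seg a e i).choose = i := by
    by_contra hne
    exact Set.disjoint_left.mp (seg_disjoint ha hsum he hne)
      (⟨i, hx⟩ : ∃ i, x ∈ seg a e i).choose_spec hx
  rw [this]

theorem rmap_mem (x : ℝ) : rmap a e x ∈ Set.Ico (0:ℝ) 1 := by
  rw [rmap]
  split
  · rename_i h
    obtain ⟨hl, hr⟩ := h.choose_spec
    constructor
    · exact div_nonneg (by linarith) (ha _).le
    · rw [div_lt_one (ha _)]; linarith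
  · norm_num

theorem measurable_dig : @Measurable ℝ I _ ⊤ (dig a e) := by
  intro S _
  by_cases harb : Classical.arbitrary I ∈ S
  · have : dig a e ⁻¹' S = (⋃ i ∈ S, seg a e i) ∪ (⋃ i, seg a e i)ᶜ := by
      ext x
      simp only [Set.mem_preimage, Set.mem_union, Set.mem_iUnion, Set.mem_compl_iff, not_exists]
      constructor
      · intro hx
        by_cases h : ∃ i, x ∈ seg a e i
        · obtain ⟨i, hi⟩ := h
          exact Or.inl ⟨i, by rwa [dig_eq ha hsum he hi] at hx, hi⟩
        · exact Or.inr (fun i hi => h ⟨i, hi⟩)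
      · rintro (⟨i, hiS, hi⟩ | h)
        · rwa [dig_eq ha hsum he hi]
        · rw [dig, dif_neg (by push_neg; exact h)]; exact harb
    rw [this]
    exact ((MeasurableSet.biUnion (Set.to_countable _) (fun i _ => measurableSet_Ico)).union
      (MeasurableSet.iUnion (fun i => measurableSet_Ico)).compl)
  · have : dig a e ⁻¹' S = ⋃ i ∈ S, seg a e i := by
      ext x
      simp only [Set.mem_preimage, Set.mem_iUnion]
      constructor
      · intro hx
        by_cases h : ∃ i, x ∈ seg a e i
        · obtain ⟨i, hi⟩ := h
          exact ⟨i, by rwa [dig_eq ha hsum he hi] at hx, hi⟩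
        · rw [dig, dif_neg (by push_neg at h ⊢; exact h)] at hx; exact absurd hx harb
      · rintro ⟨i, hiS, hi⟩
        rwa [dig_eq ha hsum he hi]
    rw [this]
    exact MeasurableSet.biUnion (Set.to_countable _) (fun i _ => measurableSet_Ico)

theorem measurable_rmap : Measurable (rmap a e) := by
  intro B hB
  have : rmap a e ⁻¹' B =
      (⋃ i, seg a e i ∩ (fun x => (x - lpt a e i) / a i) ⁻¹' B) ∪
        ((⋃ i, seg a e i)ᶜ ∩ (if (0:ℝ) ∈ B then Set.univ else ∅)) := by
    ext x
    simp only [Set.mem_preimage, Set.mem_union, Set.mem_iUnion, Set.mem_inter_iff,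
      Set.mem_compl_iff, not_exists]
    constructor
    · intro hx
      by_cases h : ∃ i, x ∈ seg a e i
      · obtain ⟨i, hi⟩ := h
        exact Or.inl ⟨i, hi, by rwa [rmap_eq ha hsum he hi] at hx⟩
      · refine Or.inr ⟨fun i hi => h ⟨i, hi⟩, ?_⟩
        rw [rmap, dif_neg h] at hx
        simp [hx]
    · rintro (⟨i, hi, hmem⟩ | ⟨h, h0⟩)
      · rwa [rmap_eq ha hsum he hi]
      · have hne : ¬ ∃ i, x ∈ seg a e i := fun ⟨i, hi⟩ => h i hi
        rw [rmap, dif_neg hne]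
        split at h0
        · assumption
        · exact absurd h0 (Set.notMem_empty x)
  rw [this]
  apply MeasurableSet.union
  · exact MeasurableSet.iUnion fun i =>
      measurableSet_Ico.inter (((measurable_id.sub_const _).div_const _) hB)
  · exact (MeasurableSet.iUnion (fun i => measurableSet_Ico)).compl.inter
      (by split <;> simp)

end basic

def wgt (a : I → ℝ) (S : Set I) : ENNReal :=
  ∑' i, S.indicator (fun i => ENNReal.ofReal (a i)) i

section meas
variable (ha : ∀ i, 0 < a i) (hsum : ∑' i, a i = 1) (he : Function.Injective e)
variable [Nonempty I] [Countable I]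
include ha hsum

theorem tsum_ofReal_a : ∑' i, ENNReal.ofReal (a i) = 1 := by
  rw [← ENNReal.ofReal_tsum_of_nonneg (fun i => (ha i).le) (summable_a ha hsum), hsum,
    ENNReal.ofReal_one]

theorem wgt_univ : wgt a Set.univ = 1 := by
  simpa [wgt] using tsum_ofReal_a ha hsum

omit ha hsum in
theorem wgt_singleton (c : I) : wgt a {c} = ENNReal.ofReal (a c) := by
  rw [wgt]
  have h : ∀ i, ({c} : Set I).indicator (fun i => ENNReal.ofReal (a i)) i
      = if i = c then ENNReal.ofReal (a c) else 0 := by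
    intro i
    by_cases h : i = c <;> simp [h]
  rw [tsum_congr h, tsum_ite_eq]

theorem volume_seg (i : I) : volume (seg a e i) = ENNReal.ofReal (a i) := by
  rw [seg, Real.volume_Ico, add_sub_cancel_left]

include he in
theorem volume_segU : volume (⋃ i, seg a e i) = 1 := by
  rw [measure_iUnion (fun i j hij => seg_disjoint ha hsum he hij)
    (fun i => measurableSet_Ico)]
  simp only [volume_seg ha hsum]
  exact tsum_ofReal_a ha hsum

theorem prob_Ico : IsProbabilityMeasure (volume.restrict (Set.Ico (0:ℝ) 1)) := by
  constructor
  simp [Real.volume_Ico]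

include he in
theorem volume_diff_segU : volume (Set.Ico (0:ℝ) 1 \ ⋃ i, seg a e i) = 0 := by
  rw [measure_diff (Set.iUnion_subset fun i => seg_subset ha hsum i)
    (MeasurableSet.iUnion fun i => measurableSet_Ico).nullMeasurableSet
    (by rw [volume_segU ha hsum he]; exact ENNReal.one_ne_top),
    volume_segU ha hsum he, Real.volume_Ico]
  simp

theorem volume_scaling (i : I) {T : Set ℝ} (hT : MeasurableSet T) :
    volume (seg a e i ∩ (fun x => (x - lpt a e i) / a i) ⁻¹' T) =
      ENNReal.ofReal (a i) * volume.restrict (Set.Ico (0:ℝ) 1) T := by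
  set l := lpt a e i
  set c := a i with hc
  have hc0 : 0 < c := ha i
  have hseg : seg a e i ∩ (fun x => (x - l) / c) ⁻¹' T
      = (fun x => (x - l) / c) ⁻¹' (T ∩ Set.Ico 0 1) := by
    ext x
    simp only [Set.mem_inter_iff, Set.mem_preimage, seg, Set.mem_Ico]
    constructor
    · rintro ⟨⟨h1, h2⟩, hT'⟩
      exact ⟨hT', div_nonneg (by linarith) hc0.le, by rw [div_lt_one hc0]; linarith⟩
    · rintro ⟨hT', h1, h2⟩
      rw [div_lt_one hc0] at h2
      have h1' : 0 ≤ x - l := by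
        by_contra hneg
        push_neg at hneg
        have : (x - l) / c < 0 := div_neg_of_neg_of_pos (by linarith) hc0
        linarith
      exact ⟨⟨by linarith, by linarith⟩, hT'⟩
  rw [hseg]
  have hcomp : (fun x : ℝ => (x - l) / c) = (fun y => c⁻¹ * y) ∘ (fun x => -l + x) := by
    funext x
    simp only [Function.comp_apply]
    field_simp
    ring
  rw [hcomp, Set.preimage_comp, measure_preimage_add volume (-l) _,
    Real.volume_preimage_mul_left (inv_ne_zero hc0.ne'), inv_inv, abs_of_pos hc0,
    Measure.restrict_apply hT, Set.inter_comm]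

include he in
theorem key_step (S : Set I) {T : Set ℝ} (hT : MeasurableSet T) :
    volume.restrict (Set.Ico (0:ℝ) 1) (dig a e ⁻¹' S ∩ rmap a e ⁻¹' T) =
      wgt a S * volume.restrict (Set.Ico (0:ℝ) 1) T := by
  classical
  set μ := volume.restrict (Set.Ico (0:ℝ) 1) with hμ
  set X := dig a e ⁻¹' S ∩ rmap a e ⁻¹' T with hX
  set U := ⋃ i, seg a e i with hU
  have hXmeas : MeasurableSet X :=
    (measurable_dig ha hsum he MeasurableSpace.measurableSet_top).inter
      (measurable_rmap ha hsum he hT)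
  have hUsub : U ⊆ Set.Ico (0:ℝ) 1 := Set.iUnion_subset fun i => seg_subset ha hsum i
  have hXU : X ∩ U = ⋃ i, (if i ∈ S then seg a e i ∩ (fun x => (x - lpt a e i) / a i) ⁻¹' T else ∅) := by
    ext x
    simp only [hX, hU, Set.mem_inter_iff, Set.mem_preimage, Set.mem_iUnion]
    constructor
    · rintro ⟨⟨hdS, hrT⟩, j, hj⟩
      refine ⟨j, ?_⟩
      rw [dig_eq ha hsum he hj] at hdS
      rw [rmap_eq ha hsum he hj] at hrT
      rw [if_pos hdS]
      exact ⟨hj, hrT⟩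
    · rintro ⟨i, hi⟩
      by_cases hiS : i ∈ S
      · rw [if_pos hiS] at hi
        obtain ⟨hseg, hT'⟩ := hi
        rw [dig_eq ha hsum he hseg, rmap_eq ha hsum he hseg]
        exact ⟨⟨hiS, hT'⟩, i, hseg⟩
      · rw [if_neg hiS] at hi
        exact absurd hi (Set.notMem_empty x)
  have h1 : μ X = volume (X ∩ Set.Ico (0:ℝ) 1) := Measure.restrict_apply hXmeas
  have h2 : volume (X ∩ Set.Ico (0:ℝ) 1) = volume (X ∩ U) := by
    apply le_antisymm
    · calc volume (X ∩ Set.Ico (0:ℝ) 1)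
          ≤ volume ((X ∩ U) ∪ (Set.Ico (0:ℝ) 1 \ U)) := by
            apply measure_mono
            rintro x ⟨hx, hIco⟩
            by_cases hxU : x ∈ U
            · exact Or.inl ⟨hx, hxU⟩
            · exact Or.inr ⟨hIco, hxU⟩
        _ ≤ volume (X ∩ U) + volume (Set.Ico (0:ℝ) 1 \ U) := measure_union_le _ _
        _ = volume (X ∩ U) := by rw [volume_diff_segU ha hsum he, add_zero]
    · exact measure_mono (Set.inter_subset_inter_right X hUsub)
  have h3 : volume (X ∩ U) = ∑' i, volume
      (if i ∈ S then seg a e i ∩ (fun x => (x - lpt a e i) / a i) ⁻¹' T else ∅) := by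
    rw [hXU]
    apply measure_iUnion
    · intro i j hij
      dsimp only [Function.onFun]
      apply Disjoint.mono
      · show _ ⊆ seg a e i
        split <;> simp [Set.inter_subset_left]
      · show _ ⊆ seg a e j
        split <;> simp [Set.inter_subset_left]
      · exact seg_disjoint ha hsum he hij
    · intro i
      split
      · exact measurableSet_Ico.inter (((measurable_id.sub_const _).div_const _) hT)
      · exact MeasurableSet.empty
  have h4 : ∀ i, volume (if i ∈ S then seg a e i ∩ (fun x => (x - lpt a e i) / a i) ⁻¹' T else ∅)
      = S.indicator (fun i => ENNReal.ofReal (a i)) i * μ T := by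
    intro i
    by_cases hiS : i ∈ S
    · rw [if_pos hiS, volume_scaling ha hsum i hT, Set.indicator_of_mem hiS]
    · rw [if_neg hiS, Set.indicator_of_notMem hiS, measure_empty, zero_mul]
  rw [h1, h2, h3, tsum_congr h4, ENNReal.tsum_mul_right]
  rfl

include he in
theorem measurePreserving_rmap :
    MeasurePreserving (rmap a e) (volume.restrict (Set.Ico (0:ℝ) 1))
      (volume.restrict (Set.Ico (0:ℝ) 1)) := by
  refine ⟨measurable_rmap ha hsum he, ?_⟩
  ext T hT
  rw [Measure.map_apply (measurable_rmap ha hsum he) hT]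
  have := key_step ha hsum he Set.univ hT
  rwa [Set.preimage_univ, Set.univ_inter, wgt_univ ha hsum, one_mul] at this

include he in
theorem cyl (n : ℕ) (S : ℕ → Set I) :
    volume.restrict (Set.Ico (0:ℝ) 1)
        (⋂ j ∈ Finset.range n, (fun x => dig a e ((rmap a e)^[j] x)) ⁻¹' S j) =
      ∏ j ∈ Finset.range n, wgt a (S j) := by
  induction n generalizing S with
  | zero =>
    haveI := prob_Ico ha hsum
    simp
  | succ n ih =>
    have hset : (⋂ j ∈ Finset.range (n+1), (fun x => dig a e ((rmap a e)^[j] x)) ⁻¹' S j)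
        = dig a e ⁻¹' S 0 ∩ rmap a e ⁻¹'
            (⋂ j ∈ Finset.range n, (fun x => dig a e ((rmap a e)^[j] x)) ⁻¹' S (j+1)) := by
      ext x
      simp only [Set.mem_iInter, Set.mem_inter_iff, Set.mem_preimage, Finset.mem_range]
      constructor
      · intro h
        refine ⟨by simpa using h 0 (Nat.succ_pos n), fun j hj => ?_⟩
        rw [← Function.iterate_succ_apply]
        exact h (j+1) (by omega)
      · rintro ⟨h0, h⟩ j hj
        cases j with
        | zero => simpa using h0
        | succ j =>
          rw [Function.iterate_succ_apply]
          exact h j (by omega)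
    have hTmeas : MeasurableSet
        (⋂ j ∈ Finset.range n, (fun x => dig a e ((rmap a e)^[j] x)) ⁻¹' S (j+1)) := by
      apply MeasurableSet.biInter (Set.to_countable _)
      intro j _
      exact ((measurable_dig ha hsum he).comp ((measurable_rmap ha hsum he).iterate j))
        MeasurableSpace.measurableSet_top
    rw [hset, key_step ha hsum he _ hTmeas, ih (fun j => S (j+1)),
      Finset.prod_range_succ']
    ring

end meas

def approx {I Δ : Type*} (g : I → Δ → Δ) (x₀ : Δ) : ℕ → (ℕ → I) → Δ
  | 0, _ => x₀
  | n+1, ω => g (ω 0) (approx g x₀ n (fun k => ω (k+1)))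

end
end BFBM

end BFBMAux

open Filter

/-- Let `Δ` be a nonempty bounded complete metric space, `(P i)_{i : I}` a countable
family of pairwise disjoint nonempty open subsets of `Δ`, and `F : Δ → Δ` a Borel map
mapping each `P i` homeomorphically onto `Δ` with inverse a `ρ`-Lipschitz contraction
(`ρ ∈ (0,1)`). Given positive reals `(a i)` with `∑ a i = 1`, there is a Borel
probability ("Bernoulli") measure `ν` on `Δ` giving each `n`-cylinder
`P_{i₀} ∩ F⁻¹ P_{i₁} ∩ ⋯ ∩ F^{-(n-1)} P_{i_{n-1}}` the mass `a_{i₀} ⋯ a_{i_{n-1}}`,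
which is `F`-invariant and ergodic. -/
theorem bernoulli_measure_for_full_branch_markov {Δ : Type*} [MetricSpace Δ]
    [CompleteSpace Δ] [Nonempty Δ] [MeasurableSpace Δ] [BorelSpace Δ]
    (hbdd : Bornology.IsBounded (Set.univ : Set Δ))
    {I : Type*} [Countable I]
    (P : I → Set Δ) (hopen : ∀ i, IsOpen (P i)) (hne : ∀ i, (P i).Nonempty)
    (hdisj : ∀ i j, i ≠ j → Disjoint (P i) (P j))
    (F : Δ → Δ) (hF : Measurable F)
    (ρ : ℝ) (hρ0 : 0 < ρ) (hρ1 : ρ < 1)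
    (hFP : ∀ i, ContinuousOn F (P i) ∧ Set.BijOn F (P i) Set.univ ∧
      ∀ x ∈ P i, ∀ x' ∈ P i, dist x x' ≤ ρ * dist (F x) (F x'))
    (a : I → ℝ) (ha : ∀ i, 0 < a i) (hsum : ∑' i, a i = 1) :
    ∃ ν : Measure Δ, IsProbabilityMeasure ν ∧
      (∀ n : ℕ, 1 ≤ n → ∀ w : Fin n → I,
        ν (⋂ j : Fin n, F^[(j : ℕ)] ⁻¹' P (w j)) =
          ENNReal.ofReal (∏ j : Fin n, a (w j))) ∧
      (∀ A : Set Δ, MeasurableSet A → ν (F ⁻¹' A) = ν A) ∧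
      (∀ A : Set Δ, MeasurableSet A → F ⁻¹' A = A → ν A = 0 ∨ ν A = 1) := by
  classical
  have hI : Nonempty I := by
    by_contra hI
    rw [not_nonempty_iff] at hI
    rw [tsum_empty] at hsum
    norm_num at hsum
  haveI := hI
  obtain ⟨e, he⟩ := exists_injective_nat I
  letI mI : MeasurableSpace I := ⊤
  obtain ⟨C, hC⟩ := Metric.isBounded_iff.mp hbdd
  have hCd : ∀ x y : Δ, dist x y ≤ C := fun x y => hC (Set.mem_univ x) (Set.mem_univ y)
  set x₀ : Δ := Classical.arbitrary Δ with hx₀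
  set g : I → Δ → Δ := fun i => Function.invFunOn F (P i) with hgdef
  have hsurj : ∀ (i : I) (y : Δ), ∃ x ∈ P i, F x = y := by
    intro i y
    obtain ⟨x, hx, hfx⟩ := (hFP i).2.1.surjOn (Set.mem_univ y)
    exact ⟨x, hx, hfx⟩
  have hg_mem : ∀ i y, g i y ∈ P i := fun i y => Function.invFunOn_mem (hsurj i y)
  have hgF : ∀ i y, F (g i y) = y := fun i y => Function.invFunOn_eq (hsurj i y)
  have hg_lip : ∀ i y y', dist (g i y) (g i y') ≤ ρ * dist y y' := by
    intro i y y'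
    have := (hFP i).2.2 _ (hg_mem i y) _ (hg_mem i y')
    rwa [hgF, hgF] at this
  have hg_cont : ∀ i, Continuous (g i) := fun i =>
    (LipschitzWith.of_dist_le_mul (K := ⟨ρ, hρ0.le⟩) (f := g i) (fun y y' => by
      exact hg_lip i y y')).continuous
  set shift : (ℕ → I) → (ℕ → I) := fun ω k => ω (k+1) with hshiftdef
  have hd : ∀ (n : ℕ) (ω : ℕ → I),
      dist (BFBM.approx g x₀ n ω) (BFBM.approx g x₀ (n+1) ω) ≤ C * ρ^n := by
    intro n
    induction n with
    | zero => intro ω; rw [pow_zero, mul_one]; exact hCd x₀ _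
    | succ n ih =>
      intro ω
      calc dist (BFBM.approx g x₀ (n+1) ω) (BFBM.approx g x₀ (n+2) ω)
          = dist (g (ω 0) (BFBM.approx g x₀ n (shift ω)))
              (g (ω 0) (BFBM.approx g x₀ (n+1) (shift ω))) := rfl
        _ ≤ ρ * dist (BFBM.approx g x₀ n (shift ω)) (BFBM.approx g x₀ (n+1) (shift ω)) :=
            hg_lip _ _ _
        _ ≤ ρ * (C * ρ^n) := mul_le_mul_of_nonneg_left (ih (shift ω)) hρ0.le
        _ = C * ρ^(n+1) := by ring
  have hcauchy : ∀ ω, CauchySeq (fun n => BFBM.approx g x₀ n ω) :=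
    fun ω => cauchySeq_of_le_geometric ρ C hρ1 (fun n => hd n ω)
  set piF : (ℕ → I) → Δ := fun ω => limUnder atTop (fun n => BFBM.approx g x₀ n ω) with hpiFdef
  have hπt : ∀ ω, Tendsto (fun n => BFBM.approx g x₀ n ω) atTop (nhds (piF ω)) :=
    fun ω => (hcauchy ω).tendsto_limUnder
  have hπ_shift : ∀ ω, piF ω = g (ω 0) (piF (shift ω)) := by
    intro ω
    have t1 : Tendsto (fun n => BFBM.approx g x₀ (n+1) ω) atTop (nhds (piF ω)) :=
      (hπt ω).comp (tendsto_add_atTop_nat 1)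
    have t2 : Tendsto (fun n => BFBM.approx g x₀ (n+1) ω) atTop
        (nhds (g (ω 0) (piF (shift ω)))) :=
      ((hg_cont (ω 0)).tendsto (piF (shift ω))).comp (hπt (shift ω))
    exact tendsto_nhds_unique t1 t2
  have hπ_mem : ∀ ω, piF ω ∈ P (ω 0) := by
    intro ω
    rw [hπ_shift ω]
    exact hg_mem (ω 0) (piF (shift ω))
  have hFπ : ∀ ω, F (piF ω) = piF (shift ω) := by
    intro ω
    rw [hπ_shift ω, hgF]
  have hshift_it : ∀ (n : ℕ) (ω : ℕ → I) (k : ℕ), (shift^[n] ω) k = ω (k+n) := by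
    intro n
    induction n with
    | zero => intro ω k; rfl
    | succ n ih =>
      intro ω k
      rw [Function.iterate_succ_apply, ih (shift ω) k]
      show ω (k + n + 1) = ω (k + (n + 1))
      rfl
  have hFπ_iter : ∀ (n : ℕ) (ω : ℕ → I), F^[n] (piF ω) = piF (shift^[n] ω) := by
    intro n
    induction n with
    | zero => intro ω; rfl
    | succ n ih =>
      intro ω
      rw [Function.iterate_succ_apply, hFπ ω, ih (shift ω), Function.iterate_succ_apply]
  have hshift_meas : Measurable shift :=
    measurable_pi_lambda _ (fun k => measurable_pi_apply (k+1))
  have hgcomp_meas : ∀ (φ : (ℕ → I) → I) (Ψ : (ℕ → I) → Δ), Measurable φ → Measurable Ψ →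
      Measurable (fun ω => g (φ ω) (Ψ ω)) := by
    intro φ Ψ hφ hΨ B hB
    have hpre : (fun ω => g (φ ω) (Ψ ω)) ⁻¹' B = ⋃ i, (φ ⁻¹' {i} ∩ Ψ ⁻¹' (g i ⁻¹' B)) := by
      ext ω
      simp only [Set.mem_preimage, Set.mem_iUnion, Set.mem_inter_iff, Set.mem_singleton_iff]
      constructor
      · intro hω
        exact ⟨φ ω, rfl, hω⟩
      · rintro ⟨i, hi, hmem⟩
        rw [hi]
        exact hmem
    rw [hpre]
    exact MeasurableSet.iUnion fun i =>
      (hφ MeasurableSpace.measurableSet_top).inter (hΨ ((hg_cont i).measurable hB))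
  have happrox_meas : ∀ n : ℕ, Measurable (fun ω => BFBM.approx g x₀ n ω) := by
    intro n
    induction n with
    | zero => exact measurable_const
    | succ n ih =>
      exact hgcomp_meas (fun ω => ω 0) (fun ω => BFBM.approx g x₀ n (shift ω))
        (measurable_pi_apply 0) (ih.comp hshift_meas)
  have hπ_meas : Measurable piF :=
    measurable_of_tendsto_metrizable' atTop happrox_meas (tendsto_pi_nhds.mpr hπt)
  -- the real side
  set μ := MeasureTheory.volume.restrict (Set.Ico (0:ℝ) 1) with hμdef
  haveI hprob : IsProbabilityMeasure μ := BFBM.prob_Ico ha hsum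
  have hr_meas : Measurable (BFBM.rmap a e) := BFBM.measurable_rmap ha hsum he
  have hdg_meas : Measurable (BFBM.dig a e) := BFBM.measurable_dig ha hsum he
  set D : ℝ → (ℕ → I) := fun x k => BFBM.dig a e ((BFBM.rmap a e)^[k] x) with hDdef
  have hD_meas : Measurable D :=
    measurable_pi_lambda _ (fun k => hdg_meas.comp (hr_meas.iterate k))
  set h : ℝ → Δ := fun x => piF (D x) with hhdef
  have hh_meas : Measurable h := hπ_meas.comp hD_meas
  have hDr : ∀ (n : ℕ) (x : ℝ), D ((BFBM.rmap a e)^[n] x) = shift^[n] (D x) := by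
    intro n x
    funext k
    rw [hshift_it n (D x) k]
    simp only [hDdef]
    rw [← Function.iterate_add_apply]
  have hhr_iter : ∀ (n : ℕ) (x : ℝ), h ((BFBM.rmap a e)^[n] x) = F^[n] (h x) := by
    intro n x
    simp only [hhdef]
    rw [hDr n x, ← hFπ_iter n (D x)]
  have hh_mem : ∀ x, h x ∈ P (D x 0) := fun x => hπ_mem (D x)
  have hmatch : ∀ (x : ℝ) (j : ℕ) (i : I),
      F^[j] (h x) ∈ P i ↔ BFBM.dig a e ((BFBM.rmap a e)^[j] x) = i := by
    intro x j i
    have hmem : F^[j] (h x) ∈ P (BFBM.dig a e ((BFBM.rmap a e)^[j] x)) := by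
      rw [← hhr_iter j x]
      exact hh_mem ((BFBM.rmap a e)^[j] x)
    constructor
    · intro hi
      by_contra hne
      exact Set.disjoint_left.mp (hdisj _ _ hne) hmem hi
    · intro hi
      rwa [hi] at hmem
  refine ⟨μ.map h, Measure.isProbabilityMeasure_map hh_meas.aemeasurable, ?_, ?_, ?_⟩
  · -- cylinders
    intro n hn w
    have hAmeas : MeasurableSet (⋂ j : Fin n, F^[(j:ℕ)] ⁻¹' P (w j)) :=
      MeasurableSet.iInter fun j => (hF.iterate _) (hopen _).measurableSet
    rw [Measure.map_apply hh_meas hAmeas]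
    set S : ℕ → Set I := fun j => if hj : j < n then {w ⟨j, hj⟩} else Set.univ with hSdef
    have hpre : h ⁻¹' (⋂ j : Fin n, F^[(j:ℕ)] ⁻¹' P (w j)) =
        ⋂ j ∈ Finset.range n, (fun x => BFBM.dig a e ((BFBM.rmap a e)^[j] x)) ⁻¹' S j := by
      ext x
      simp only [Set.mem_preimage, Set.mem_iInter, Finset.mem_range]
      constructor
      · intro hx j hj
        have := (hmatch x j (w ⟨j, hj⟩)).mp (hx ⟨j, hj⟩)
        simp only [hSdef]
        rw [dif_pos hj]
        simpa using this
      · intro hx j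
        apply (hmatch x (j:ℕ) (w j)).mpr
        have := hx (j:ℕ) j.isLt
        simp only [hSdef] at this
        rw [dif_pos j.isLt] at this
        simpa [Fin.eta] using this
    rw [hpre, BFBM.cyl ha hsum he n S,
      ENNReal.ofReal_prod_of_nonneg (fun j _ => (ha (w j)).le)]
    have : ∀ j : Fin n, ENNReal.ofReal (a (w j)) = BFBM.wgt a (S (j:ℕ)) := by
      intro j
      simp only [hSdef]
      rw [dif_pos j.isLt, Fin.eta, BFBM.wgt_singleton]
    rw [Finset.prod_congr rfl (fun j _ => this j),
      Fin.prod_univ_eq_prod_range (fun j => BFBM.wgt a (S j)) n]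
  · -- invariance
    intro A hA
    rw [Measure.map_apply hh_meas (hF hA), Measure.map_apply hh_meas hA]
    have hpre : h ⁻¹' (F ⁻¹' A) = BFBM.rmap a e ⁻¹' (h ⁻¹' A) := by
      ext x
      simp only [Set.mem_preimage]
      have := hhr_iter 1 x
      simp only [Function.iterate_one] at this
      rw [this]
    rw [hpre]
    exact (BFBM.measurePreserving_rmap ha hsum he).measure_preimage
      (hh_meas hA).nullMeasurableSet
  · -- ergodicity
    intro A hA hAinv
    have hFn_inv : ∀ n : ℕ, F^[n] ⁻¹' A = A := by
      intro n
      induction n with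
      | zero => rfl
      | succ n ih => rw [Function.iterate_succ', Set.preimage_comp, hAinv, ih]
    set s : ℕ → MeasurableSpace ℝ := fun k => MeasurableSpace.generateFrom
      {t | ∃ i : I, (fun x => BFBM.dig a e ((BFBM.rmap a e)^[k] x)) ⁻¹' {i} = t} with hsdef
    have hs_le : ∀ k, s k ≤ (by infer_instance : MeasurableSpace ℝ) := by
      intro k
      apply MeasurableSpace.generateFrom_le
      rintro t ⟨i, rfl⟩
      exact (hdg_meas.comp (hr_meas.iterate k)) MeasurableSpace.measurableSet_top
    have hs_pi : ∀ k, IsPiSystem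
        {t | ∃ i : I, (fun x => BFBM.dig a e ((BFBM.rmap a e)^[k] x)) ⁻¹' {i} = t} := by
      rintro k t1 ⟨i, rfl⟩ t2 ⟨j, rfl⟩ hne
      obtain ⟨x, hx1, hx2⟩ := hne
      simp only [Set.mem_preimage, Set.mem_singleton_iff] at hx1 hx2
      have hij : i = j := hx1 ▸ hx2
      subst hij
      rw [Set.inter_self]
      exact ⟨i, rfl⟩
    have hs_indep : ProbabilityTheory.iIndepSets
        (fun k => {t | ∃ i : I, (fun x => BFBM.dig a e ((BFBM.rmap a e)^[k] x)) ⁻¹' {i} = t})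
        μ := by
      rw [ProbabilityTheory.iIndepSets_iff]
      intro J f hf
      set c : ℕ → I := fun j => if hj : j ∈ J then (hf j hj).choose
        else Classical.arbitrary I with hcdef
      have hfc : ∀ j ∈ J, (fun x => BFBM.dig a e ((BFBM.rmap a e)^[j] x)) ⁻¹' {c j} = f j := by
        intro j hj
        simp only [hcdef]
        rw [dif_pos hj]
        exact (hf j hj).choose_spec
      set N := (J.sup id) + 1 with hNdef
      have hJN : ∀ j ∈ J, j < N := fun j hj => Nat.lt_succ_of_le (Finset.le_sup (f := id) hj)
      set S : ℕ → Set I := fun j => if j ∈ J then {c j} else Set.univ with hSdef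
      have hseteq : ⋂ j ∈ J, f j
          = ⋂ j ∈ Finset.range N, (fun x => BFBM.dig a e ((BFBM.rmap a e)^[j] x)) ⁻¹' S j := by
        ext x
        simp only [Set.mem_iInter, Finset.mem_range, Set.mem_preimage]
        constructor
        · intro hx j hj
          simp only [hSdef]
          by_cases hjJ : j ∈ J
          · rw [if_pos hjJ]
            have := hx j hjJ
            rw [← hfc j hjJ] at this
            exact this
          · rw [if_neg hjJ]
            trivial
        · intro hx j hj
          have := hx j (hJN j hj)
          simp only [hSdef] at this
          rw [if_pos hj] at this
          rw [← hfc j hj]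
          exact this
      rw [hseteq, BFBM.cyl ha hsum he N S]
      have hwgt : ∀ j ∈ Finset.range N, BFBM.wgt a (S j)
          = if j ∈ J then ENNReal.ofReal (a (c j)) else 1 := by
        intro j _
        simp only [hSdef]
        split
        · exact BFBM.wgt_singleton _
        · exact BFBM.wgt_univ ha hsum
      rw [Finset.prod_congr rfl hwgt, Finset.prod_ite_mem,
        Finset.inter_eq_right.mpr (fun j hj => Finset.mem_range.mpr (hJN j hj))]
      apply Finset.prod_congr rfl
      intro j hj
      rw [← hfc j hj]
      have hsingle : (fun x => BFBM.dig a e ((BFBM.rmap a e)^[j] x)) ⁻¹' {c j}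
          = ⋂ m ∈ Finset.range (j+1), (fun x => BFBM.dig a e ((BFBM.rmap a e)^[m] x)) ⁻¹'
              (if m = j then ({c j} : Set I) else Set.univ) := by
        ext x
        simp only [Set.mem_iInter, Finset.mem_range, Set.mem_preimage]
        constructor
        · intro hx m hm
          by_cases hmj : m = j
          · subst hmj
            rw [if_pos rfl]
            exact hx
          · rw [if_neg hmj]
            trivial
        · intro hx
          have := hx j (Nat.lt_succ_self j)
          rwa [if_pos rfl] at this
      rw [hsingle, BFBM.cyl ha hsum he (j+1) _]
      have hwgt2 : ∀ m ∈ Finset.range (j+1),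
          BFBM.wgt a (if m = j then ({c j} : Set I) else Set.univ)
            = if m = j then ENNReal.ofReal (a (c j)) else 1 := by
        intro m _
        split
        · exact BFBM.wgt_singleton _
        · exact BFBM.wgt_univ ha hsum
      rw [Finset.prod_congr rfl hwgt2, Finset.prod_ite_eq',
        if_pos (Finset.self_mem_range_succ j)]
    have hiIndep : ProbabilityTheory.iIndep s μ :=
      ProbabilityTheory.iIndepSets.iIndep hs_le _ hs_pi (fun k => rfl) hs_indep
    have ht_tail : MeasurableSet[limsup s atTop] (h ⁻¹' A) := by
      rw [Filter.limsup_eq_iInf_iSup_of_nat, MeasurableSpace.measurableSet_iInf]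
      intro n
      have hteq : h ⁻¹' A = (fun x => D ((BFBM.rmap a e)^[n] x)) ⁻¹' (piF ⁻¹' A) := by
        ext x
        simp only [Set.mem_preimage]
        have h1 : piF (D ((BFBM.rmap a e)^[n] x)) = h ((BFBM.rmap a e)^[n] x) := rfl
        rw [h1, hhr_iter n x]
        conv_lhs => rw [← hFn_inv n]
        exact Iff.rfl
      rw [hteq]
      have hmeasE : Measurable[⨆ m, ⨆ (_ : m ≥ n), s m]
          (fun x => D ((BFBM.rmap a e)^[n] x)) := by
        refine @measurable_pi_lambda ℝ ℕ (fun _ => I) (⨆ m, ⨆ (_ : m ≥ n), s m)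
          (fun _ => mI) _ (fun k => ?_)
        have hfun : (fun x => D ((BFBM.rmap a e)^[n] x) k)
            = fun x => BFBM.dig a e ((BFBM.rmap a e)^[k+n] x) := by
          funext x
          simp only [hDdef]
          rw [← Function.iterate_add_apply]
        rw [hfun]
        have hDigmeas : Measurable[s (k+n)]
            (fun x => BFBM.dig a e ((BFBM.rmap a e)^[k+n] x)) := by
          intro S' _
          have hUn : (fun x => BFBM.dig a e ((BFBM.rmap a e)^[k+n] x)) ⁻¹' S'
              = ⋃ i ∈ S', (fun x => BFBM.dig a e ((BFBM.rmap a e)^[k+n] x)) ⁻¹' {i} := by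
            ext x
            simp only [Set.mem_preimage, Set.mem_iUnion, Set.mem_singleton_iff]
            constructor
            · intro hx
              exact ⟨_, hx, rfl⟩
            · rintro ⟨i, hi, hieq⟩
              exact hieq ▸ hi
          rw [hUn]
          exact MeasurableSet.biUnion (Set.to_countable _)
            (fun i _ => MeasurableSpace.measurableSet_generateFrom ⟨i, rfl⟩)
        exact hDigmeas.mono
          (le_iSup₂ (f := fun (m : ℕ) (_ : m ≥ n) => s m) (k+n) (Nat.le_add_left n k)) le_rfl
      exact hmeasE (hπ_meas hA)
    have h01 := ProbabilityTheory.measure_zero_or_one_of_measurableSet_limsup_atTop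
      hs_le hiIndep ht_tail
    rwa [Measure.map_apply hh_meas hA]
end

section
/- Let M be a compact metric space with its Borel σ-algebra, f : M → M a Borel measurable map, Δ ⊆ M a nonempty Borel subset, and R : Δ → ℕ a Borel measurable function with R(x) ≥ 1 and f^{R(x)}(x) ∈ Δ for all x ∈ Δ; let F : Δ → Δ be the induced map F(x) = f^{R(x)}(x). Let ν be an F-invariant ergodic Borel probability measure on Δ with ∫_Δ R dν < ∞. Then the measure μ := (∫_Δ R dν)^{-1} · ∑_{j=0}^{∞} (f^j)_* (ν|_{{x ∈ Δ : R(x) > j}}) is an f-invariant ergodic Borel probability measure on M. -/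
open MeasureTheory ENNReal

set_option maxHeartbeats 1000000

/-- Let `f` be a Borel self-map of a compact metric space `M`, `Δ ⊆ M` a nonempty
Borel subset, `R : Δ → ℕ` a Borel return time (`R ≥ 1`, `f^{R(x)}(x) ∈ Δ`), and
`F : Δ → Δ` the induced map `F(x) = f^{R(x)}(x)`. If `ν` is an `F`-invariant ergodic
Borel probability measure on `Δ` with `∫ R dν < ∞`, then the spread-out measure
`μ = (∫ R dν)⁻¹ ∑_{j≥0} (f^j)_*(ν|_{{R > j}})` is an `f`-invariant ergodic Borel
probability measure on `M`. -/
theorem induced_measure_spreads_to_invariant_ergodic {M : Type*} [MetricSpace M]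
    [CompactSpace M] [MeasurableSpace M] [BorelSpace M]
    (f : M → M) (hf : Measurable f)
    (Δ : Set M) (hΔmeas : MeasurableSet Δ) (hΔne : Δ.Nonempty)
    (R : Δ → ℕ) (hRmeas : Measurable R) (hR1 : ∀ x : Δ, 1 ≤ R x)
    (hRin : ∀ x : Δ, f^[R x] (x : M) ∈ Δ)
    (F : Δ → Δ) (hF : ∀ x : Δ, (F x : M) = f^[R x] (x : M))
    (ν : Measure Δ) (hνprob : IsProbabilityMeasure ν)
    (hνinv : ∀ A : Set Δ, MeasurableSet A → ν (F ⁻¹' A) = ν A)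
    (hνerg : ∀ A : Set Δ, MeasurableSet A → F ⁻¹' A = A → ν A = 0 ∨ ν A = 1)
    (hνint : Integrable (fun x : Δ => (R x : ℝ)) ν)
    (μ : Measure M)
    (hμ : μ = (ENNReal.ofReal (∫ x, (R x : ℝ) ∂ν))⁻¹ •
      Measure.sum (fun j : ℕ =>
        Measure.map (fun x : Δ => f^[j] (x : M)) (ν.restrict {x : Δ | j < R x}))) :
    IsProbabilityMeasure μ ∧
      (∀ A : Set M, MeasurableSet A → μ (f ⁻¹' A) = μ A) ∧
      (∀ A : Set M, MeasurableSet A → f ⁻¹' A = A → μ A = 0 ∨ μ A = 1) := by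
  set c : ℝ≥0∞ := (ENNReal.ofReal (∫ x, (R x : ℝ) ∂ν)) with hc
  -- basic measurability facts
  have hg : ∀ j : ℕ, Measurable (fun x : Δ => f^[j] (x : M)) :=
    fun j => (hf.iterate j).comp measurable_subtype_coe
  have hS : ∀ j : ℕ, MeasurableSet {x : Δ | j < R x} :=
    fun j => hRmeas (show MeasurableSet (Set.Ioi j) from trivial)
  have hRn : ∀ n : ℕ, MeasurableSet {x : Δ | R x = n} :=
    fun n => hRmeas (show MeasurableSet {n} from trivial)
  have hgR : Measurable (fun x : Δ => f^[R x] (x : M)) := by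
    intro s hs
    have h : (fun x : Δ => f^[R x] (x : M)) ⁻¹' s =
        ⋃ n, {x : Δ | R x = n} ∩ (fun x : Δ => f^[n] (x : M)) ⁻¹' s := by
      ext x
      simp only [Set.mem_preimage, Set.mem_iUnion, Set.mem_inter_iff, Set.mem_setOf_eq]
      constructor
      · intro hx; exact ⟨R x, rfl, hx⟩
      · rintro ⟨n, hn, hx⟩; rw [hn]; exact hx
    rw [h]
    exact MeasurableSet.iUnion fun n => (hRn n).inter ((hg n) hs)
  have hFmeas : Measurable F := by
    have hFe : F = fun x : Δ => (⟨f^[R x] (x : M), hRin x⟩ : Δ) :=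
      funext fun x => Subtype.ext (hF x)
    rw [hFe]
    exact hgR.subtype_mk
  -- the key sum computation
  have hsum : ∑' j : ℕ, ν {x : Δ | j < R x} = ∫⁻ x, (R x : ℝ≥0∞) ∂ν := by
    have h1 : ∀ j : ℕ, ν {x : Δ | j < R x} =
        ∫⁻ x, ({x : Δ | j < R x}).indicator (1 : Δ → ℝ≥0∞) x ∂ν := by
      intro j; rw [lintegral_indicator_one (hS j)]
    rw [tsum_congr h1,
      ← lintegral_tsum fun j => (measurable_one.indicator (hS j)).aemeasurable]
    refine lintegral_congr fun x => ?_
    have h2 : ∀ j : ℕ, ({y : Δ | j < R y}).indicator (1 : Δ → ℝ≥0∞) x =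
        if j < R x then 1 else 0 := by
      intro j; simp [Set.indicator_apply]
    rw [tsum_congr h2]
    rw [tsum_eq_sum (s := Finset.range (R x))
      (fun j hj => by simp only [Finset.mem_range, not_lt] at hj; simp [Nat.not_lt.mpr hj])]
    rw [Finset.sum_congr rfl (fun j hj => if_pos (Finset.mem_range.mp hj))]
    simp [Finset.sum_const, Finset.card_range]
  have hcL : c = ∫⁻ x, (R x : ℝ≥0∞) ∂ν := by
    rw [hc, MeasureTheory.ofReal_integral_eq_lintegral_ofReal hνint
      (Filter.Eventually.of_forall fun x => Nat.cast_nonneg _)]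
    simp only [ENNReal.ofReal_natCast]
  have h1le : (1 : ℝ≥0∞) ≤ c := by
    rw [hcL]
    calc (1 : ℝ≥0∞) = ∫⁻ _, 1 ∂ν := by simp
      _ ≤ ∫⁻ x, (R x : ℝ≥0∞) ∂ν := lintegral_mono fun x => by
          show (1 : ℝ≥0∞) ≤ (R x : ℝ≥0∞)
          exact_mod_cast hR1 x
  have hcne0 : c ≠ 0 := by intro h; rw [h] at h1le; simp at h1le
  have hcnetop : c ≠ ⊤ := by rw [hc]; exact ENNReal.ofReal_ne_top
  have hinvc : c⁻¹ * c = 1 := ENNReal.inv_mul_cancel hcne0 hcnetop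
  -- the formula for μ on measurable sets
  have hμapp : ∀ s : Set M, MeasurableSet s →
      μ s = c⁻¹ * ∑' j : ℕ, ν ((fun x : Δ => f^[j] (x : M)) ⁻¹' s ∩ {x : Δ | j < R x}) := by
    intro s hs
    rw [hμ, Measure.smul_apply, Measure.sum_apply _ hs, smul_eq_mul]
    congr 1
    refine tsum_congr fun j => ?_
    rw [Measure.map_apply (hg j) hs, Measure.restrict_apply ((hg j) hs)]
  -- notation for val-preimage
  have hBmeas : ∀ A : Set M, MeasurableSet A →
      MeasurableSet ((fun x : Δ => (x : M)) ⁻¹' A) :=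
    fun A hA => measurable_subtype_coe hA
  -- zeroth term
  have hzero : ∀ A : Set M,
      (fun x : Δ => f^[0] (x : M)) ⁻¹' A ∩ {x : Δ | 0 < R x} =
        (fun x : Δ => (x : M)) ⁻¹' A := by
    intro A
    ext x
    simp only [Function.iterate_zero_apply, Set.mem_inter_iff, Set.mem_preimage,
      Set.mem_setOf_eq]
    exact ⟨fun h => h.1, fun h => ⟨h, hR1 x⟩⟩
  refine ⟨?_, ?_, ?_⟩
  · -- probability measure
    constructor
    rw [hμapp Set.univ MeasurableSet.univ]
    simp only [Set.preimage_univ, Set.univ_inter]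
    rw [hsum, ← hcL, hinvc]
  · -- invariance
    intro A hA
    set B : Set Δ := (fun x : Δ => (x : M)) ⁻¹' A with hBdef
    have hB : MeasurableSet B := hBmeas A hA
    rw [hμapp _ (hf hA), hμapp _ hA]
    congr 1
    have hpre : ∀ j : ℕ, (fun x : Δ => f^[j] (x : M)) ⁻¹' (f ⁻¹' A) =
        (fun x : Δ => f^[j + 1] (x : M)) ⁻¹' A := by
      intro j; ext x
      simp [Function.iterate_succ_apply']
    have hsplit : ∀ j : ℕ,
        ν ((fun x : Δ => f^[j + 1] (x : M)) ⁻¹' A ∩ {x : Δ | j < R x}) =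
          ν ((fun x : Δ => f^[j + 1] (x : M)) ⁻¹' A ∩ {x : Δ | j + 1 < R x})
            + ν ({x : Δ | R x = j + 1} ∩ F ⁻¹' B) := by
      intro j
      have hseteq :
          (fun x : Δ => f^[j + 1] (x : M)) ⁻¹' A ∩ {x : Δ | j < R x} =
            ((fun x : Δ => f^[j + 1] (x : M)) ⁻¹' A ∩ {x : Δ | j + 1 < R x}) ∪
              ({x : Δ | R x = j + 1} ∩ F ⁻¹' B) := by
        ext x
        simp only [Set.mem_inter_iff, Set.mem_preimage, Set.mem_setOf_eq, Set.mem_union,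
          hBdef]
        constructor
        · rintro ⟨hx, hj⟩
          rcases Nat.lt_or_ge (j + 1) (R x) with h | h
          · exact Or.inl ⟨hx, h⟩
          · have hRx : R x = j + 1 := le_antisymm h hj
            refine Or.inr ⟨hRx, ?_⟩
            rw [hF x, hRx]; exact hx
        · rintro (⟨hx, hj⟩ | ⟨hRx, hx⟩)
          · exact ⟨hx, Nat.lt_of_succ_lt hj⟩
          · rw [hF x, hRx] at hx
            exact ⟨hx, by omega⟩
      have hdisj : Disjoint
          ((fun x : Δ => f^[j + 1] (x : M)) ⁻¹' A ∩ {x : Δ | j + 1 < R x})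
          ({x : Δ | R x = j + 1} ∩ F ⁻¹' B) := by
        rw [Set.disjoint_left]
        rintro x ⟨_, hx1⟩ ⟨hx2, _⟩
        simp only [Set.mem_setOf_eq] at hx1 hx2
        omega
      rw [hseteq, measure_union hdisj ((hRn (j + 1)).inter (hFmeas hB))]
    have hpart : ∑' j : ℕ, ν ({x : Δ | R x = j + 1} ∩ F ⁻¹' B) = ν B := by
      have hdisj : Pairwise (Function.onFun Disjoint
          fun j : ℕ => {x : Δ | R x = j + 1} ∩ F ⁻¹' B) := by
        intro i k hik
        rw [Function.onFun, Set.disjoint_left]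
        rintro x ⟨hx1, _⟩ ⟨hx2, _⟩
        simp only [Set.mem_setOf_eq] at hx1 hx2
        omega
      rw [← hνinv B hB,
        ← measure_iUnion hdisj fun j => (hRn (j + 1)).inter (hFmeas hB)]
      congr 1
      ext x
      simp only [Set.mem_iUnion, Set.mem_inter_iff, Set.mem_setOf_eq, Set.mem_preimage]
      constructor
      · rintro ⟨j, _, hx⟩; exact hx
      · intro hx
        refine ⟨R x - 1, ?_, hx⟩
        have := hR1 x; omega
    calc ∑' j : ℕ, ν ((fun x : Δ => f^[j] (x : M)) ⁻¹' (f ⁻¹' A) ∩ {x : Δ | j < R x})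
        = ∑' j : ℕ, (ν ((fun x : Δ => f^[j + 1] (x : M)) ⁻¹' A ∩ {x : Δ | j + 1 < R x})
            + ν ({x : Δ | R x = j + 1} ∩ F ⁻¹' B)) := by
          refine tsum_congr fun j => ?_
          rw [hpre j, hsplit j]
      _ = (∑' j : ℕ, ν ((fun x : Δ => f^[j + 1] (x : M)) ⁻¹' A ∩ {x : Δ | j + 1 < R x}))
            + ν B := by
          rw [ENNReal.tsum_add, hpart]
      _ = ∑' j : ℕ, ν ((fun x : Δ => f^[j] (x : M)) ⁻¹' A ∩ {x : Δ | j < R x}) := by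
          rw [tsum_eq_zero_add' (f := fun j : ℕ =>
            ν ((fun x : Δ => f^[j] (x : M)) ⁻¹' A ∩ {x : Δ | j < R x})) ENNReal.summable]
          rw [hzero A, hBdef, add_comm]
  · -- ergodicity
    intro A hA hAinv
    set B : Set Δ := (fun x : Δ => (x : M)) ⁻¹' A with hBdef
    have hB : MeasurableSet B := hBmeas A hA
    have hiter : ∀ j : ℕ, f^[j] ⁻¹' A = A := by
      intro j
      induction j with
      | zero => simp
      | succ n ih =>
        rw [Function.iterate_succ, Set.preimage_comp, ih, hAinv]
    have hterm : ∀ j : ℕ,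
        (fun x : Δ => f^[j] (x : M)) ⁻¹' A = B := by
      intro j
      have : (fun x : Δ => f^[j] (x : M)) = f^[j] ∘ (fun x : Δ => (x : M)) := rfl
      rw [this, Set.preimage_comp, hiter j]
    have hFB : F ⁻¹' B = B := by
      ext x
      simp only [Set.mem_preimage, hBdef]
      rw [hF x]
      have : f^[R x] (x : M) ∈ A ↔ (x : M) ∈ f^[R x] ⁻¹' A := Iff.rfl
      rw [this, hiter (R x)]
    rw [hμapp A hA]
    simp only [hterm]
    rcases hνerg B hB hFB with h0 | h1
    · left
      have : ∀ j : ℕ, ν (B ∩ {x : Δ | j < R x}) = 0 :=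
        fun j => le_antisymm (le_trans (measure_mono Set.inter_subset_left) h0.le)
          (by simp)
      simp [this]
    · right
      have hBc : ν Bᶜ = 0 := by
        have := measure_compl hB (measure_ne_top ν B)
        rw [h1] at this
        simp [this]
      have : ∀ j : ℕ, ν (B ∩ {x : Δ | j < R x}) = ν {x : Δ | j < R x} := by
        intro j
        rw [Set.inter_comm]
        exact measure_inter_conull hBc
      rw [tsum_congr this, hsum, ← hcL, hinvc]
end

section
/- Let M be a compact metric space without isolated points and f : M → M a local homeomorphism (hence every fiber f^{-1}(y) is finite). For x ∈ M, define the α-limit set α_f(x) as the set of points y ∈ M for which there exist a sequence of integers n_k → ∞ and points x_k ∈ M with f^{n_k}(x_k) = x and x_k → y. Then α_f(x) = M if and only if the pre-orbit O⁻(x) = ⋃_{n ≥ 0} f^{-n}({x}) is dense in M. -/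
open Filter Topology

lemma fiber_finite_of_isLocalHomeomorph {M : Type*} [MetricSpace M] [CompactSpace M]
    {g : M → M} (hg : IsLocalHomeomorph g) (x : M) : (g ⁻¹' {x}).Finite := by
  set S := g ⁻¹' {x} with hS
  have hSc : IsClosed S := isClosed_singleton.preimage hg.continuous
  have hdisc : DiscreteTopology S := by
    rw [discreteTopology_subtype_iff]
    intro s hs
    obtain ⟨e, hse, he⟩ := hg s
    rw [inf_principal_eq_bot]
    have : e.source ∩ {s}ᶜ ⊆ Sᶜ := by
      intro t ⟨ht, hts⟩ htS
      exact hts (e.injOn ht hse (show e t = e s by rw [← he]; exact htS.trans hs.symm))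
    exact mem_nhdsWithin.mpr ⟨e.source, e.open_source, hse, fun t ⟨h1, h2⟩ => this ⟨h1, h2⟩⟩
  exact hSc.isCompact.finite (isDiscrete_iff_discreteTopology.mpr hdisc)

lemma iterate_fiber_finite {M : Type*} [MetricSpace M] [CompactSpace M]
    {f : M → M} (hf : IsLocalHomeomorph f) (x : M) (n : ℕ) : (f^[n] ⁻¹' {x}).Finite := by
  have : IsLocalHomeomorph (f^[n]) := by
    induction n with
    | zero => exact (Homeomorph.refl M).isLocalHomeomorph
    | succ k ih => rw [Function.iterate_succ]; exact ih.comp hf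
  exact fiber_finite_of_isLocalHomeomorph this x

/-- Let `M` be a compact metric space without isolated points and `f : M → M` a local
homeomorphism. For `x : M`, the `α`-limit set of `x` equals all of `M` (every `y`
is a limit of points `x_k` with `f^{n_k}(x_k) = x`, `n_k → ∞`) if and only if the
pre-orbit `O⁻(x) = ⋃_{n ≥ 0} f^{-n}({x})` is dense in `M`. -/
theorem alphaLimit_eq_univ_iff_dense_preorbit {M : Type*} [MetricSpace M] [CompactSpace M]
    (hM : ∀ x : M, Filter.NeBot (nhdsWithin x {x}ᶜ))
    (f : M → M) (hf : IsLocalHomeomorph f) (x : M) :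
    (∀ y : M, ∃ (φ : ℕ → ℕ) (xs : ℕ → M),
        Tendsto φ atTop atTop ∧ (∀ k, f^[φ k] (xs k) = x) ∧ Tendsto xs atTop (𝓝 y)) ↔
      Dense {w : M | ∃ n : ℕ, f^[n] w = x} := by
  constructor
  · intro h y
    obtain ⟨φ, xs, _, hfx, hxs⟩ := h y
    exact mem_closure_of_tendsto hxs (Eventually.of_forall fun k => ⟨φ k, hfx k⟩)
  · intro hd y
    have H : ∀ k : ℕ, ∃ (n : ℕ) (w : M), k ≤ n ∧ f^[n] w = x ∧ dist w y < 1 / (k + 1) := by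
      intro k
      have hε : (0 : ℝ) < 1 / (k + 1) := by positivity
      set B := Metric.ball y (1 / (k + 1 : ℝ)) with hB
      haveI : NeBot (𝓝[≠] y) := hM y
      have hBinf : B.Infinite := infinite_of_mem_nhds y (Metric.ball_mem_nhds y hε)
      have hF : (⋃ m ∈ Finset.range k, f^[m] ⁻¹' {x}).Finite :=
        Set.Finite.biUnion (Finset.range k).finite_toSet fun m _ => iterate_fiber_finite hf x m
      have hopen : IsOpen (B \ (⋃ m ∈ Finset.range k, f^[m] ⁻¹' {x})) :=
        Metric.isOpen_ball.sdiff hF.isClosed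
      have hne : (B \ (⋃ m ∈ Finset.range k, f^[m] ⁻¹' {x})).Nonempty :=
        (hBinf.diff hF).nonempty
      obtain ⟨w, ⟨n, hn⟩, hwB, hwF⟩ := hd.exists_mem_open hopen hne
      refine ⟨n, w, ?_, hn, hwB⟩
      by_contra hlt
      exact hwF (Set.mem_biUnion (Finset.mem_range.mpr (Nat.lt_of_not_le hlt)) hn)
    choose φ xs h1 h2 h3 using H
    refine ⟨φ, xs, tendsto_atTop_mono h1 tendsto_id, h2, ?_⟩
    rw [tendsto_iff_dist_tendsto_zero]
    exact squeeze_zero (fun k => dist_nonneg) (fun k => (h3 k).le)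
      tendsto_one_div_add_atTop_nhds_zero_nat
end
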